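/- Let 1 < p ≤ 2, let (M, μ) be a measure space, and let x, y, z, w ∈ L_p(μ). Then max{‖x − y‖_p², ‖y − z‖_p², ‖z − w‖_p², ‖w − x‖_p²} ≥ (1/4)·‖x − z‖_p² + ((p − 1)/4)·‖y − w‖_p². -/

import Mathlib

open MeasureTheory

open Real Set

lemma aux_dpow {q : ℝ} (y : ℝ) (h : 1 + y ≠ 0) :
    HasDerivAt (fun t : ℝ => (1+t) ^ q) (q * (1+y) ^ (q-1)) y := by
  have := (HasDerivAt.const_add (1:ℝ) (hasDerivAt_id y)).rpow_const
    (p := q) (Or.inl (by simpa using h))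
  simpa using this

lemma aux_dpow' {q : ℝ} (y : ℝ) (h : 1 - y ≠ 0) :
    HasDerivAt (fun t : ℝ => (1-t) ^ q) (-(q * (1-y) ^ (q-1))) y := by
  have := (HasDerivAt.const_sub (1:ℝ) (hasDerivAt_id y)).rpow_const
    (p := q) (Or.inl (by simpa using h))
  convert this using 1
  simp
  simp only [id]; ring

/-- `(1+t)^s + (1-t)^s ≥ 2` for `s ≤ 0`, `0 < t < 1`. -/
lemma aux_sum_rpow_ge_two {s t : ℝ} (hs : s ≤ 0) (ht0 : 0 < t) (ht1 : t < 1) :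
    (2:ℝ) ≤ (1+t) ^ s + (1-t) ^ s := by
  have h1 : (0:ℝ) < 1 + t := by linarith
  have h2 : (0:ℝ) < 1 - t := by linarith
  have hxy : (1+t) * (1-t) ≤ 1 := by nlinarith
  have hxypos : 0 < (1+t) * (1-t) := by positivity
  have hamgm : 2 * (Real.sqrt ((1+t)^s) * Real.sqrt ((1-t)^s)) ≤ (1+t)^s + (1-t)^s := by
    nlinarith [sq_nonneg (Real.sqrt ((1+t)^s) - Real.sqrt ((1-t)^s)),
      Real.sq_sqrt (Real.rpow_nonneg h1.le s), Real.sq_sqrt (Real.rpow_nonneg h2.le s)]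
  have hmul : Real.sqrt ((1+t)^s) * Real.sqrt ((1-t)^s) = (((1+t)*(1-t)) ^ s) ^ (1/(2:ℝ)) := by
    rw [← Real.sqrt_mul (Real.rpow_nonneg h1.le s), ← Real.mul_rpow h1.le h2.le,
      Real.sqrt_eq_rpow]
  have hone : (1:ℝ) ≤ (((1+t)*(1-t)) ^ s) ^ (1/(2:ℝ)) := by
    apply Real.one_le_rpow _ (by norm_num)
    calc (1:ℝ) = 1 ^ s := (Real.one_rpow s).symm
    _ ≤ ((1+t)*(1-t)) ^ s := Real.rpow_le_rpow_of_nonpos hxypos hxy hs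
  calc (2:ℝ) ≤ 2 * ((((1+t)*(1-t)) ^ s) ^ (1/(2:ℝ))) := by linarith
  _ = 2 * (Real.sqrt ((1+t)^s) * Real.sqrt ((1-t)^s)) := by rw [hmul]
  _ ≤ _ := hamgm

/-- quadratic lower bound: `(1+t)^p + (1-t)^p ≥ 2 + p(p-1)t²` on `[0,1]`. -/
lemma aux_quad {p : ℝ} (hp1 : 1 < p) (hp2 : p ≤ 2) {t : ℝ} (ht0 : 0 ≤ t) (ht1 : t ≤ 1) :
    2 + p*(p-1)*t^2 ≤ (1+t) ^ p + (1-t) ^ p := by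
  set φ : ℝ → ℝ := fun t => p*(1+t) ^ (p-1) - p*(1-t) ^ (p-1) - 2*p*(p-1)*t with hφ
  have hc1 : ∀ q : ℝ, 0 < q → ContinuousOn (fun t : ℝ => (1+t) ^ q) (Icc 0 1) := by
    intro q hq
    apply ContinuousOn.rpow_const (by fun_prop)
    intro x hx; left; simp only [mem_Icc] at hx; nlinarith [hx.1]
  have hc2 : ∀ q : ℝ, 0 < q → ContinuousOn (fun t : ℝ => (1-t) ^ q) (Icc 0 1) := by
    intro q hq
    apply ContinuousOn.rpow_const (by fun_prop)
    intro x hx; simp only [mem_Icc] at hx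
    rcases eq_or_lt_of_le hx.2 with h | h
    · right; linarith
    · left; intro hc; nlinarith [hc]
  have hder : ∀ x ∈ Ioo (0:ℝ) 1, HasDerivAt (fun t : ℝ => (1+t) ^ p + (1-t) ^ p
      - p*(p-1)*t^2) (φ x) x := by
    intro x hx
    obtain ⟨hx0, hx1⟩ := hx
    have d1 := aux_dpow (q := p) x (by intro h; nlinarith)
    have d2 := aux_dpow' (q := p) x (by intro h; nlinarith)
    have d3 : HasDerivAt (fun t : ℝ => p*(p-1)*t^2) (p*(p-1)*(2*x)) x := by
      simpa using (hasDerivAt_pow 2 x).const_mul (p*(p-1))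
    have := (d1.add d2).sub d3
    convert this using 1
    iterate 3 rfl
    simp only [hφ]; ring
  have hφ0 : ∀ x ∈ Ioo (0:ℝ) 1, 0 ≤ φ x := by
    intro x hx
    obtain ⟨hx0, hx1⟩ := hx
    have hcφ : ContinuousOn φ (Icc 0 1) := by
      apply ContinuousOn.sub
      apply ContinuousOn.sub
      · exact continuousOn_const.mul (hc1 (p-1) (by linarith))
      · exact continuousOn_const.mul (hc2 (p-1) (by linarith))
      · fun_prop
    have hderφ : ∀ y ∈ Ioo (0:ℝ) 1, HasDerivAt φ
        (p*(p-1)*((1+y) ^ (p-1-1) + (1-y) ^ (p-1-1) - 2)) y := by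
      intro y hy
      obtain ⟨hy0, hy1⟩ := hy
      have e1 := (aux_dpow (q := p-1) y (by intro h; nlinarith)).const_mul p
      have e2 := (aux_dpow' (q := p-1) y (by intro h; nlinarith)).const_mul p
      have e3 : HasDerivAt (fun t : ℝ => 2*p*(p-1)*t) (2*p*(p-1)) y := by
        simpa using (hasDerivAt_id y).const_mul (2*p*(p-1))
      have := (e1.sub e2).sub e3
      convert this using 1
      iterate 3 rfl
      ring
    have hmφ : MonotoneOn φ (Icc 0 1) := by
      apply monotoneOn_of_deriv_nonneg (convex_Icc 0 1) hcφ
      · rw [interior_Icc]; intro y hy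
        exact (hderφ y hy).differentiableAt.differentiableWithinAt
      · rw [interior_Icc]; intro y hy
        rw [(hderφ y hy).deriv]
        have h21 : p - 1 - 1 = p - 2 := by ring
        rw [h21]
        have := aux_sum_rpow_ge_two (s := p-2) (by linarith) hy.1 hy.2
        have hpp : 0 ≤ p*(p-1) := by nlinarith
        nlinarith
    have hφz : φ 0 = 0 := by simp [hφ]
    have := hmφ (Set.left_mem_Icc.2 zero_le_one) (Set.mem_Icc.2 ⟨hx0.le, hx1.le⟩) hx0.le
    rw [hφz] at this
    exact this
  have hmono : MonotoneOn (fun t : ℝ => (1+t) ^ p + (1-t) ^ p - p*(p-1)*t^2) (Icc 0 1) := by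
    apply monotoneOn_of_deriv_nonneg (convex_Icc 0 1)
    · exact ((hc1 p (by linarith)).add (hc2 p (by linarith))).sub (by fun_prop)
    · rw [interior_Icc]
      intro x hx
      exact (hder x hx).differentiableAt.differentiableWithinAt
    · rw [interior_Icc]
      intro x hx
      rw [(hder x hx).deriv]
      exact hφ0 x hx
  have h0 : (fun t : ℝ => (1+t) ^ p + (1-t) ^ p - p*(p-1)*t^2) 0 = 2 := by norm_num
  have := hmono (Set.left_mem_Icc.2 zero_le_one) (Set.mem_Icc.2 ⟨ht0, ht1⟩) ht0
  rw [h0] at this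
  simp only at this
  linarith [this]

lemma aux_core {p : ℝ} (hp1 : 1 < p) (hp2 : p ≤ 2) {t : ℝ} (ht0 : 0 ≤ t) (ht1 : t ≤ 1) :
    (1 + (p-1)*t^2) ^ (p/2) ≤ ((1+t) ^ p + (1-t) ^ p)/2 := by
  have hb := rpow_one_add_le_one_add_mul_self (s := (p-1)*t^2)
    (by nlinarith) (p := p/2) (by linarith) (by linarith)
  have hq := aux_quad hp1 hp2 ht0 ht1
  calc (1+(p-1)*t^2) ^ (p/2) ≤ 1 + (p/2)*((p-1)*t^2) := hb
  _ ≤ ((1+t) ^ p + (1-t) ^ p)/2 := by nlinarith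

lemma aux_bcl_nonneg {p : ℝ} (hp1 : 1 < p) (hp2 : p ≤ 2) {a b : ℝ} (hb : 0 ≤ b) (hba : b ≤ a) :
    (a^2 + (p-1)*b^2) ^ (p/2) ≤ ((a+b) ^ p + (a-b) ^ p)/2 := by
  have ha : 0 ≤ a := hb.trans hba
  rcases eq_or_lt_of_le ha with h | hapos
  · have hb0 : b = 0 := le_antisymm (by linarith) hb
    subst hb0
    rw [← h]
    norm_num [Real.zero_rpow (by positivity : p/2 ≠ 0), Real.zero_rpow (by positivity : p ≠ 0)]
  set t := b / a with htdef
  have ht0 : 0 ≤ t := by positivity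
  have ht1 : t ≤ 1 := div_le_one_of_le₀ hba ha
  have hcore := aux_core hp1 hp2 ht0 ht1
  have hkey : a^2 + (p-1)*b^2 = a^2 * (1 + (p-1)*t^2) := by
    rw [htdef]; field_simp
  have h1t : a * (1+t) = a + b := by rw [htdef]; field_simp
  have h2t : a * (1-t) = a - b := by rw [htdef]; field_simp
  have hap : (0:ℝ) ≤ a ^ p := Real.rpow_nonneg ha p
  have hsq : ((a^2 : ℝ)) ^ (p/2) = a ^ p := by
    rw [← Real.rpow_natCast a 2, ← Real.rpow_mul ha]
    congr 1
    push_cast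
    ring
  calc (a^2 + (p-1)*b^2) ^ (p/2)
      = (a^2) ^ (p/2) * (1 + (p-1)*t^2) ^ (p/2) := by
        rw [hkey, Real.mul_rpow (by positivity) (by nlinarith)]
    _ = a ^ p * (1 + (p-1)*t^2) ^ (p/2) := by rw [hsq]
    _ ≤ a ^ p * (((1+t) ^ p + (1-t) ^ p)/2) := by
        apply mul_le_mul_of_nonneg_left hcore hap
    _ = ((a+b) ^ p + (a-b) ^ p)/2 := by
        rw [← h1t, ← h2t, Real.mul_rpow ha (by linarith), Real.mul_rpow ha (by linarith)]
        ring

lemma aux_abs_sum {p a b : ℝ} :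
    |a+b| ^ p + |a-b| ^ p = (|a|+|b|) ^ p + |(|a|-|b|)| ^ p := by
  rcases le_or_gt 0 a with ha | ha <;> rcases le_or_gt 0 b with hb | hb
  · rw [abs_of_nonneg ha, abs_of_nonneg hb, abs_of_nonneg (by linarith : (0:ℝ) ≤ a+b)]
  · rw [abs_of_nonneg ha, abs_of_nonpos hb.le, abs_of_nonneg (by linarith : (0:ℝ) ≤ a-b)]
    rw [show a + -b = a - b by ring, show a - -b = a + b by ring]
    try ring
  · rw [abs_of_nonpos ha.le, abs_of_nonneg hb, abs_of_nonpos (by linarith : a-b ≤ 0)]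
    rw [show -a + b = -(a - b) by ring, show -a - b = -(a + b) by ring, abs_neg]
    try ring
  · rw [abs_of_nonpos ha.le, abs_of_nonpos hb.le, abs_of_nonpos (by linarith : a+b ≤ 0)]
    rw [show -a + -b = -(a + b) by ring, show -a - -b = -(a - b) by ring, abs_neg]
    try ring

/-- The Ball–Carlen–Lieb two-point inequality. -/
lemma aux_bcl {p : ℝ} (hp1 : 1 < p) (hp2 : p ≤ 2) (a b : ℝ) :
    (a^2 + (p-1)*b^2) ^ (p/2) ≤ (|a+b| ^ p + |a-b| ^ p)/2 := by
  rw [aux_abs_sum]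
  rcases le_or_gt (|b|) (|a|) with h | h
  · have h2 := aux_bcl_nonneg hp1 hp2 (abs_nonneg b) h
    rw [abs_of_nonneg (by linarith : (0:ℝ) ≤ |a| - |b|), ← sq_abs a, ← sq_abs b]
    exact h2
  · have h2 := aux_bcl_nonneg hp1 hp2 (abs_nonneg a) h.le
    rw [abs_of_nonpos (by linarith : |a| - |b| ≤ 0), show -(|a|-|b|) = |b|-|a| by ring,
      add_comm (|a|)]
    refine le_trans ?_ h2
    apply Real.rpow_le_rpow (by nlinarith [sq_abs a, sq_abs b, sq_nonneg a, sq_nonneg b]) ?_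
      (by linarith)
    have hsq : a^2 ≤ b^2 := by
      rw [← sq_abs a, ← sq_abs b]
      exact pow_le_pow_left₀ (abs_nonneg a) h.le 2
    nlinarith [sq_abs a, sq_abs b,
      mul_nonneg (by linarith : (0:ℝ) ≤ 2-p) (by linarith : (0:ℝ) ≤ b^2-a^2)]

open ENNReal in
lemma aux_concave2 {r : ℝ} (hr0 : 0 < r) (hr1 : r ≤ 1) (w₁ w₂ z₁ z₂ : ℝ≥0∞)
    (hw : w₁ + w₂ = 1) : w₁ * z₁ ^ r + w₂ * z₂ ^ r ≤ (w₁ * z₁ + w₂ * z₂) ^ r := by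
  have hw₁t : w₁ ≠ ∞ := fun h => by simp [h] at hw
  have hw₂t : w₂ ≠ ∞ := fun h => by simp [h] at hw
  rcases eq_or_ne w₁ 0 with h1 | h1
  · subst h1
    simp only [zero_mul, zero_add] at *
    simp [hw]
  rcases eq_or_ne w₂ 0 with h2 | h2
  · subst h2
    simp only [zero_mul, add_zero] at *
    simp [hw]
  rcases eq_or_ne z₁ ∞ with hz1 | hz1
  · subst hz1
    rw [ENNReal.mul_top h1, top_add, ENNReal.top_rpow_of_pos hr0]
    exact le_top
  rcases eq_or_ne z₂ ∞ with hz2 | hz2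
  · subst hz2
    rw [ENNReal.mul_top h2, add_top, ENNReal.top_rpow_of_pos hr0]
    exact le_top
  lift w₁ to NNReal using hw₁t
  lift w₂ to NNReal using hw₂t
  lift z₁ to NNReal using hz1
  lift z₂ to NNReal using hz2
  rw [← ENNReal.coe_rpow_of_nonneg _ hr0.le, ← ENNReal.coe_rpow_of_nonneg _ hr0.le,
    ← ENNReal.coe_mul, ← ENNReal.coe_mul, ← ENNReal.coe_add, ← ENNReal.coe_mul,
    ← ENNReal.coe_mul, ← ENNReal.coe_add, ← ENNReal.coe_rpow_of_nonneg _ hr0.le,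
    ENNReal.coe_le_coe, ← NNReal.coe_le_coe]
  push_cast [NNReal.coe_rpow]
  have hw' : (w₁ : ℝ) + (w₂ : ℝ) = 1 := by
    rw [← ENNReal.coe_add, ← ENNReal.coe_one, ENNReal.coe_inj] at hw
    exact_mod_cast congrArg NNReal.toReal hw
  have hcc := (Real.concaveOn_rpow hr0.le hr1).2 (Set.mem_Ici.2 z₁.coe_nonneg)
    (Set.mem_Ici.2 z₂.coe_nonneg) w₁.coe_nonneg w₂.coe_nonneg hw'
  simpa [smul_eq_mul] using hcc

open ENNReal in
lemma aux_rev_minkowski {α : Type*} [MeasurableSpace α] {μ : MeasureTheory.Measure α}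
    {r : ℝ} (hr0 : 0 < r) (hr1 : r ≤ 1)
    {f g : α → ℝ≥0∞} (hf : AEMeasurable f μ) (hg : AEMeasurable g μ) :
    (∫⁻ a, f a ^ r ∂μ) ^ (1/r) + (∫⁻ a, g a ^ r ∂μ) ^ (1/r)
      ≤ (∫⁻ a, (f a + g a) ^ r ∂μ) ^ (1/r) := by
  have hrne : r ≠ 0 := hr0.ne'
  set A := (∫⁻ a, f a ^ r ∂μ) ^ (1/r) with hA
  set B := (∫⁻ a, g a ^ r ∂μ) ^ (1/r) with hB
  have hmonoA : A ≤ (∫⁻ a, (f a + g a) ^ r ∂μ) ^ (1/r) := by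
    apply ENNReal.rpow_le_rpow _ (by positivity)
    exact MeasureTheory.lintegral_mono fun a => ENNReal.rpow_le_rpow le_self_add hr0.le
  have hmonoB : B ≤ (∫⁻ a, (f a + g a) ^ r ∂μ) ^ (1/r) := by
    apply ENNReal.rpow_le_rpow _ (by positivity)
    exact MeasureTheory.lintegral_mono fun a => ENNReal.rpow_le_rpow le_add_self hr0.le
  rcases eq_or_ne A 0 with hA0 | hA0
  · rw [hA0, zero_add]; exact hmonoB
  rcases eq_or_ne B 0 with hB0 | hB0
  · rw [hB0, add_zero]; exact hmonoA
  rcases eq_or_ne A ∞ with hAt | hAt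
  · have : (∫⁻ a, (f a + g a) ^ r ∂μ) ^ (1/r) = ∞ := top_le_iff.1 (hAt ▸ hmonoA)
    rw [this]; exact le_top
  rcases eq_or_ne B ∞ with hBt | hBt
  · have : (∫⁻ a, (f a + g a) ^ r ∂μ) ^ (1/r) = ∞ := top_le_iff.1 (hBt ▸ hmonoB)
    rw [this]; exact le_top
  -- main case
  set c := A + B with hc
  have hc0 : c ≠ 0 := fun h => hA0 (by simpa using (add_eq_zero.1 h).1)
  have hct : c ≠ ∞ := by simp [hc, ENNReal.add_eq_top, hAt, hBt]
  have hIf : ∫⁻ a, f a ^ r ∂μ = A ^ r := by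
    rw [hA, ← ENNReal.rpow_mul, one_div, inv_mul_cancel₀ hrne, ENNReal.rpow_one]
  have hIg : ∫⁻ a, g a ^ r ∂μ = B ^ r := by
    rw [hB, ← ENNReal.rpow_mul, one_div, inv_mul_cancel₀ hrne, ENNReal.rpow_one]
  have hArne : A ^ r ≠ 0 := by simp [ENNReal.rpow_eq_zero_iff, hA0, hAt, hr0, hr0.ne']
  have hArt : A ^ r ≠ ∞ := by simp [ENNReal.rpow_eq_top_iff, hA0, hAt, hr0.ne', hr0.not_gt]
  have hBrne : B ^ r ≠ 0 := by simp [ENNReal.rpow_eq_zero_iff, hB0, hBt, hr0, hr0.ne']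
  have hBrt : B ^ r ≠ ∞ := by simp [ENNReal.rpow_eq_top_iff, hB0, hBt, hr0.ne', hr0.not_gt]
  have hw : A / c + B / c = 1 := by
    rw [ENNReal.div_add_div_same, ← hc, ENNReal.div_self hc0 hct]
  have hpt : ∀ a : α, (A/c) * ((f a / A) ^ r) + (B/c) * ((g a / B) ^ r)
      ≤ ((f a + g a) / c) ^ r := by
    intro a
    have h := aux_concave2 hr0 hr1 (A/c) (B/c) (f a / A) (g a / B) hw
    have e1 : (A/c) * (f a / A) = f a / c := by
      rw [div_eq_mul_inv, div_eq_mul_inv, div_eq_mul_inv]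
      calc A * c⁻¹ * (f a * A⁻¹) = (A * A⁻¹) * (f a * c⁻¹) := by ring
      _ = f a * c⁻¹ := by rw [ENNReal.mul_inv_cancel hA0 hAt, one_mul]
    have e2 : (B/c) * (g a / B) = g a / c := by
      rw [div_eq_mul_inv, div_eq_mul_inv, div_eq_mul_inv]
      calc B * c⁻¹ * (g a * B⁻¹) = (B * B⁻¹) * (g a * c⁻¹) := by ring
      _ = g a * c⁻¹ := by rw [ENNReal.mul_inv_cancel hB0 hBt, one_mul]
    rw [e1, e2, ENNReal.div_add_div_same] at h
    exact h
  have hint : (1:ℝ≥0∞) ≤ (∫⁻ a, (f a + g a) ^ r ∂μ) / c ^ r := by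
    have hfr : AEMeasurable (fun a => (f a / A) ^ r) μ :=
      (hf.div_const A).pow_const r
    calc (1:ℝ≥0∞) = (A/c) * 1 + (B/c) * 1 := by rw [mul_one, mul_one, hw]
    _ = (A/c) * ((∫⁻ a, f a ^ r ∂μ) / A ^ r) + (B/c) * ((∫⁻ a, g a ^ r ∂μ) / B ^ r) := by
        rw [hIf, hIg, ENNReal.div_self hArne hArt, ENNReal.div_self hBrne hBrt]
    _ = (A/c) * (∫⁻ a, (f a / A) ^ r ∂μ) + (B/c) * (∫⁻ a, (g a / B) ^ r ∂μ) := by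
        congr 1
        · congr 1
          rw [div_eq_mul_inv (∫⁻ a, f a ^ r ∂μ),
            ← MeasureTheory.lintegral_mul_const' _ _ (ENNReal.inv_ne_top.2 hArne)]
          apply MeasureTheory.lintegral_congr fun a => ?_
          rw [ENNReal.div_rpow_of_nonneg _ _ hr0.le, div_eq_mul_inv]
        · congr 1
          rw [div_eq_mul_inv (∫⁻ a, g a ^ r ∂μ),
            ← MeasureTheory.lintegral_mul_const' _ _ (ENNReal.inv_ne_top.2 hBrne)]
          apply MeasureTheory.lintegral_congr fun a => ?_
          rw [ENNReal.div_rpow_of_nonneg _ _ hr0.le, div_eq_mul_inv]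
    _ = ∫⁻ a, (A/c) * ((f a / A) ^ r) + (B/c) * ((g a / B) ^ r) ∂μ := by
        rw [MeasureTheory.lintegral_add_left' (hfr.const_mul _),
          MeasureTheory.lintegral_const_mul' _ _ (by
            simp [ENNReal.div_eq_top, hAt, hc0] ),
          MeasureTheory.lintegral_const_mul' _ _ (by
            simp [ENNReal.div_eq_top, hBt, hc0] )]
    _ ≤ ∫⁻ a, ((f a + g a) / c) ^ r ∂μ := MeasureTheory.lintegral_mono fun a => hpt a
    _ = (∫⁻ a, (f a + g a) ^ r ∂μ) / c ^ r := by
        rw [div_eq_mul_inv (∫⁻ a, (f a + g a) ^ r ∂μ),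
          ← MeasureTheory.lintegral_mul_const' _ _ (ENNReal.inv_ne_top.2 (by
            simp [ENNReal.rpow_eq_zero_iff, hc0, hct, hr0.ne', hr0.not_gt, hr0]))]
        apply MeasureTheory.lintegral_congr fun a => ?_
        rw [ENNReal.div_rpow_of_nonneg _ _ hr0.le, div_eq_mul_inv]
  have hcr : c ^ r ≤ ∫⁻ a, (f a + g a) ^ r ∂μ := by
    have hcrt : c ^ r ≠ ∞ := by
      simp [ENNReal.rpow_eq_top_iff, hc0, hct, hr0.ne', hr0.not_gt]
    rw [ENNReal.le_div_iff_mul_le (Or.inl (by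
      simp [ENNReal.rpow_eq_zero_iff, hc0, hct, hr0.ne', hr0.not_gt, hr0])) (Or.inl hcrt),
      one_mul] at hint
    exact hint
  calc A + B = c := rfl
  _ = (c ^ r) ^ (1/r) := by
      rw [← ENNReal.rpow_mul, mul_one_div, div_self hrne, ENNReal.rpow_one]
  _ ≤ _ := ENNReal.rpow_le_rpow hcr (by positivity)

open ENNReal in
lemma aux_bcl_ennreal {p : ℝ} (hp1 : 1 < p) (hp2 : p ≤ 2) (A B : ℝ) :
    ((‖A+B‖₊ : ℝ≥0∞) ^ (2:ℝ) + ENNReal.ofReal (p-1) * (‖A-B‖₊ : ℝ≥0∞) ^ (2:ℝ)) ^ (p/2)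
      ≤ (2:ℝ≥0∞) ^ (p-1) * ((‖A‖₊ : ℝ≥0∞) ^ p + (‖B‖₊ : ℝ≥0∞) ^ p) := by
  have hreal : ((A+B)^2 + (p-1)*(A-B)^2) ^ (p/2)
      ≤ 2 ^ (p-1) * (|A| ^ p + |B| ^ p) := by
    have h := aux_bcl hp1 hp2 (A+B) (A-B)
    have e1 : A + B + (A - B) = 2*A := by ring
    have e2 : A + B - (A - B) = 2*B := by ring
    rw [e1, e2] at h
    have e3 : |2*A| ^ p = 2 ^ p * |A| ^ p := by
      rw [abs_mul, abs_two, Real.mul_rpow (by norm_num) (abs_nonneg A)]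
    have e4 : |2*B| ^ p = 2 ^ p * |B| ^ p := by
      rw [abs_mul, abs_two, Real.mul_rpow (by norm_num) (abs_nonneg B)]
    rw [e3, e4] at h
    have e5 : (2:ℝ) ^ (p-1) = 2 ^ p / 2 := by
      rw [Real.rpow_sub (by norm_num), Real.rpow_one]
    rw [e5]
    calc ((A+B)^2 + (p-1)*(A-B)^2) ^ (p/2) ≤ (2 ^ p * |A| ^ p + 2 ^ p * |B| ^ p)/2 := h
    _ = 2 ^ p / 2 * (|A| ^ p + |B| ^ p) := by ring
  have hnn : ∀ x : ℝ, (‖x‖₊ : ℝ≥0∞) = ENNReal.ofReal |x| := by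
    intro x
    exact Real.enorm_eq_ofReal_abs x
  rw [hnn, hnn, hnn, hnn]
  have h2 : (2:ℝ≥0∞) = ENNReal.ofReal 2 := by norm_num
  rw [h2]
  rw [ENNReal.ofReal_rpow_of_nonneg (abs_nonneg (A+B)) (by norm_num : (0:ℝ) ≤ 2),
    ENNReal.ofReal_rpow_of_nonneg (abs_nonneg (A-B)) (by norm_num : (0:ℝ) ≤ 2),
    ENNReal.ofReal_rpow_of_nonneg (abs_nonneg A) (by linarith : (0:ℝ) ≤ p),
    ENNReal.ofReal_rpow_of_nonneg (abs_nonneg B) (by linarith : (0:ℝ) ≤ p),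
    ENNReal.ofReal_rpow_of_nonneg (by norm_num : (0:ℝ) ≤ 2) (by linarith : (0:ℝ) ≤ p-1),
    ← ENNReal.ofReal_mul (by linarith : (0:ℝ) ≤ p - 1),
    ← ENNReal.ofReal_add (Real.rpow_nonneg (abs_nonneg (A+B)) 2)
      (mul_nonneg (by linarith) (Real.rpow_nonneg (abs_nonneg (A-B)) 2)),
    ENNReal.ofReal_rpow_of_nonneg
      (add_nonneg (Real.rpow_nonneg (abs_nonneg (A+B)) 2)
        (mul_nonneg (by linarith) (Real.rpow_nonneg (abs_nonneg (A-B)) 2)))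
      (by positivity : (0:ℝ) ≤ p/2),
    ← ENNReal.ofReal_add (Real.rpow_nonneg (abs_nonneg A) p)
      (Real.rpow_nonneg (abs_nonneg B) p),
    ← ENNReal.ofReal_mul (Real.rpow_nonneg (by norm_num) (p-1))]
  apply ENNReal.ofReal_le_ofReal
  calc (|A+B| ^ (2:ℝ) + (p-1) * |A-B| ^ (2:ℝ)) ^ (p/2)
      = ((A+B)^2 + (p-1)*(A-B)^2) ^ (p/2) := by
        rw [Real.rpow_two, Real.rpow_two, sq_abs, sq_abs]
    _ ≤ 2 ^ (p-1) * (|A| ^ p + |B| ^ p) := hreal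

open ENNReal MeasureTheory in
/-- 2-uniform smoothness of `L_p`, `1 < p ≤ 2` (Ball–Carlen–Lieb). -/
lemma aux_smooth {p : ℝ} (hp1 : 1 < p) (hp2 : p ≤ 2)
    {M : Type} [MeasurableSpace M] (μ : Measure M)
    (a b : Lp ℝ (ENNReal.ofReal p) μ) :
    ‖a + b‖ ^ 2 + (p-1) * ‖a - b‖ ^ 2 ≤ 2*‖a‖ ^ 2 + 2*‖b‖ ^ 2 := by
  have hp0 : (0:ℝ) < p := by linarith
  have hq0 : ENNReal.ofReal p ≠ 0 := by simp [ENNReal.ofReal_eq_zero, not_le, hp0]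
  have hqt : ENNReal.ofReal p ≠ ∞ := ENNReal.ofReal_ne_top
  have hqr : (ENNReal.ofReal p).toReal = p := ENNReal.toReal_ofReal hp0.le
  set c : ℝ≥0∞ := ENNReal.ofReal (p-1) with hcdef
  -- eLpNorm to the p
  have hIp : ∀ h : Lp ℝ (ENNReal.ofReal p) μ, ∫⁻ ω, (‖h ω‖₊ : ℝ≥0∞) ^ p ∂μ = (eLpNorm h (ENNReal.ofReal p) μ) ^ p := by
    intro h
    rw [eLpNorm_eq_lintegral_rpow_enorm_toReal hq0 hqt, hqr, ← ENNReal.rpow_mul,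
      one_div, inv_mul_cancel₀ hp0.ne', ENNReal.rpow_one]
    rfl
  set f : M → ℝ≥0∞ := fun ω => (‖(a + b : Lp ℝ (ENNReal.ofReal p) μ) ω‖₊ : ℝ≥0∞) ^ (2:ℝ) with hfdef
  set g : M → ℝ≥0∞ := fun ω => c * (‖(a - b : Lp ℝ (ENNReal.ofReal p) μ) ω‖₊ : ℝ≥0∞) ^ (2:ℝ) with hgdef
  have hfm : AEMeasurable f μ := (Lp.aestronglyMeasurable (a+b)).enorm.pow_const _
  have hgm : AEMeasurable g μ :=
    ((Lp.aestronglyMeasurable (a-b)).enorm.pow_const _).const_mul c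
  have hr0 : (0:ℝ) < p/2 := by linarith
  have hr1 : p/2 ≤ 1 := by linarith
  -- reverse Minkowski step
  have hrm := aux_rev_minkowski (μ := μ) hr0 hr1 hfm hgm
  have h1r : 1/(p/2) = 2/p := by field_simp
  have hfI : (∫⁻ ω, f ω ^ (p/2) ∂μ) ^ (1/(p/2)) = (eLpNorm (a+b) (ENNReal.ofReal p) μ) ^ (2:ℝ) := by
    rw [h1r]
    have : ∀ ω, f ω ^ (p/2) = (‖(a + b : Lp ℝ (ENNReal.ofReal p) μ) ω‖₊ : ℝ≥0∞) ^ p := by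
      intro ω
      rw [hfdef, ← ENNReal.rpow_mul, show (2:ℝ)*(p/2) = p by ring]
    rw [lintegral_congr this, hIp (a+b), ← ENNReal.rpow_mul,
      show p*(2/p) = 2 by field_simp]
  have hgI : (∫⁻ ω, g ω ^ (p/2) ∂μ) ^ (1/(p/2)) = c * (eLpNorm (a-b) (ENNReal.ofReal p) μ) ^ (2:ℝ) := by
    rw [h1r]
    have : ∀ ω, g ω ^ (p/2) = c ^ (p/2) * (‖(a - b : Lp ℝ (ENNReal.ofReal p) μ) ω‖₊ : ℝ≥0∞) ^ p := by
      intro ω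
      rw [hgdef, ENNReal.mul_rpow_of_nonneg _ _ hr0.le, ← ENNReal.rpow_mul,
        show (2:ℝ)*(p/2) = p by ring]
    rw [lintegral_congr this, lintegral_const_mul' _ _ (by
        exact ENNReal.rpow_ne_top_of_nonneg hr0.le ENNReal.ofReal_ne_top),
      hIp (a-b), ENNReal.mul_rpow_of_nonneg _ _ (by positivity), ← ENNReal.rpow_mul,
      ← ENNReal.rpow_mul, show (p/2)*(2/p) = 1 by field_simp, ENNReal.rpow_one,
      show p*(2/p) = 2 by field_simp]
  -- pointwise BCL step
  have hae : ∫⁻ ω, (f ω + g ω) ^ (p/2) ∂μ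
      ≤ (2:ℝ≥0∞) ^ (p-1) * ((eLpNorm a (ENNReal.ofReal p) μ) ^ p + (eLpNorm b (ENNReal.ofReal p) μ) ^ p) := by
    have hptw : ∀ᵐ ω ∂μ, (f ω + g ω) ^ (p/2)
        ≤ (2:ℝ≥0∞) ^ (p-1) * ((‖a ω‖₊ : ℝ≥0∞) ^ p + (‖b ω‖₊ : ℝ≥0∞) ^ p) := by
      filter_upwards [Lp.coeFn_add a b, Lp.coeFn_sub a b] with ω h1 h2
      rw [hfdef, hgdef]
      simp only [h1, h2, Pi.add_apply, Pi.sub_apply]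
      exact aux_bcl_ennreal hp1 hp2 (a ω) (b ω)
    calc ∫⁻ ω, (f ω + g ω) ^ (p/2) ∂μ
        ≤ ∫⁻ ω, (2:ℝ≥0∞) ^ (p-1) * ((‖a ω‖₊ : ℝ≥0∞) ^ p + (‖b ω‖₊ : ℝ≥0∞) ^ p) ∂μ :=
          lintegral_mono_ae hptw
      _ = (2:ℝ≥0∞) ^ (p-1) * ((eLpNorm a (ENNReal.ofReal p) μ) ^ p + (eLpNorm b (ENNReal.ofReal p) μ) ^ p) := by
          rw [lintegral_const_mul' _ _ (by
              exact ENNReal.rpow_ne_top_of_nonneg (by linarith) (by norm_num)),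
            lintegral_add_left' (f := fun ω => (‖a ω‖₊ : ℝ≥0∞) ^ p) ((Lp.aestronglyMeasurable a).enorm.pow_const _),
            hIp a, hIp b]
  -- power mean step
  have hpm : ((2:ℝ≥0∞) ^ (p-1) * ((eLpNorm a (ENNReal.ofReal p) μ) ^ p + (eLpNorm b (ENNReal.ofReal p) μ) ^ p)) ^ (2/p)
      ≤ 2 * (eLpNorm a (ENNReal.ofReal p) μ) ^ (2:ℝ) + 2 * (eLpNorm b (ENNReal.ofReal p) μ) ^ (2:ℝ) := by
    set Na := eLpNorm a (ENNReal.ofReal p) μ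
    set Nb := eLpNorm b (ENNReal.ofReal p) μ
    have hs : 1 ≤ 2/p := by rw [le_div_iff₀ hp0]; linarith
    have harith := ENNReal.rpow_arith_mean_le_arith_mean2_rpow (1/2) (1/2)
      (Na ^ p) (Nb ^ p) (by rw [← two_mul]; rw [ENNReal.mul_div_cancel'] <;> norm_num) hs
    have hNa2 : (Na ^ p) ^ (2/p) = Na ^ (2:ℝ) := by
      rw [← ENNReal.rpow_mul, show p*(2/p) = 2 by field_simp]
    have hNb2 : (Nb ^ p) ^ (2/p) = Nb ^ (2:ℝ) := by
      rw [← ENNReal.rpow_mul, show p*(2/p) = 2 by field_simp]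
    rw [hNa2, hNb2] at harith
    have hsplit : (2:ℝ≥0∞) ^ (p-1) * (Na ^ p + Nb ^ p)
        = 2 ^ p * (1/2 * Na ^ p + 1/2 * Nb ^ p) := by
      rw [ENNReal.rpow_sub _ _ (by norm_num) (by norm_num), ENNReal.rpow_one]
      simp only [div_eq_mul_inv, one_div]
      ring
    rw [hsplit, ENNReal.mul_rpow_of_nonneg _ _ (by positivity), ← ENNReal.rpow_mul,
      show p * (2/p) = 2 by field_simp]
    have hcancel : (2:ℝ≥0∞) * 2⁻¹ = 1 := ENNReal.mul_inv_cancel (by norm_num) (by norm_num)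
    calc (2:ℝ≥0∞) ^ (2:ℝ) * (1/2 * Na ^ p + 1/2 * Nb ^ p) ^ (2/p)
        ≤ 2 ^ (2:ℝ) * (1/2 * Na ^ (2:ℝ) + 1/2 * Nb ^ (2:ℝ)) := by
          exact mul_le_mul_right harith _
      _ = 2*2 * (2⁻¹ * Na ^ (2:ℝ) + 2⁻¹ * Nb ^ (2:ℝ)) := by
          rw [show ((2:ℝ≥0∞) ^ (2:ℝ)) = 2*2 by
            rw [show (2:ℝ) = ((2:ℕ):ℝ) by norm_num, ENNReal.rpow_natCast]; norm_num]
          rw [one_div]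
      _ = 2 * ((2*2⁻¹) * Na ^ (2:ℝ)) + 2 * ((2*2⁻¹) * Nb ^ (2:ℝ)) := by ring
      _ = 2 * Na ^ (2:ℝ) + 2 * Nb ^ (2:ℝ) := by rw [hcancel, one_mul, one_mul]
  -- combine in ℝ≥0∞
  have hmain : (eLpNorm (a+b) (ENNReal.ofReal p) μ) ^ (2:ℝ) + c * (eLpNorm (a-b) (ENNReal.ofReal p) μ) ^ (2:ℝ)
      ≤ 2 * (eLpNorm a (ENNReal.ofReal p) μ) ^ (2:ℝ) + 2 * (eLpNorm b (ENNReal.ofReal p) μ) ^ (2:ℝ) := by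
    rw [← hfI, ← hgI]
    refine le_trans hrm (le_trans ?_ hpm)
    rw [h1r]
    exact ENNReal.rpow_le_rpow hae (by positivity)
  -- pass to real numbers
  have hfin : ∀ h : Lp ℝ (ENNReal.ofReal p) μ, eLpNorm h (ENNReal.ofReal p) μ ≠ ∞ := fun h => Lp.eLpNorm_ne_top h
  have hrhs_fin : 2 * (eLpNorm a (ENNReal.ofReal p) μ) ^ (2:ℝ) + 2 * (eLpNorm b (ENNReal.ofReal p) μ) ^ (2:ℝ) ≠ ∞ := by
    apply ENNReal.add_ne_top.2
    constructor <;>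
      exact ENNReal.mul_ne_top (by norm_num)
        (ENNReal.rpow_ne_top_of_nonneg (by norm_num) (hfin _))
  have := ENNReal.toReal_le_toReal (ne_top_of_le_ne_top hrhs_fin hmain) hrhs_fin |>.2 hmain
  rw [ENNReal.toReal_add, ENNReal.toReal_add, ENNReal.toReal_mul, ENNReal.toReal_mul,
    ENNReal.toReal_mul] at this
  · simp only [← ENNReal.toReal_rpow, ENNReal.toReal_ofNat, hcdef,
      ENNReal.toReal_ofReal (by linarith : (0:ℝ) ≤ p - 1)] at this
    rw [Lp.norm_def, Lp.norm_def, Lp.norm_def, Lp.norm_def]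
    rw [Real.rpow_two, Real.rpow_two, Real.rpow_two, Real.rpow_two] at this
    exact this
  · exact ENNReal.mul_ne_top (by norm_num)
      (ENNReal.rpow_ne_top_of_nonneg (by norm_num) (hfin _))
  · exact ENNReal.mul_ne_top (by norm_num)
      (ENNReal.rpow_ne_top_of_nonneg (by norm_num) (hfin _))
  · exact ENNReal.rpow_ne_top_of_nonneg (by norm_num) (hfin _)
  · exact ENNReal.mul_ne_top (ENNReal.ofReal_ne_top)
      (ENNReal.rpow_ne_top_of_nonneg (by norm_num) (hfin _))

/-- (Short diagonals / maximum form.)  Let `1 < p ≤ 2`, `(M, μ)` a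
measure space, and `x, y, z, w ∈ L_p(μ)`.  Then
`max {‖x-y‖², ‖y-z‖², ‖z-w‖², ‖w-x‖²} ≥ (1/4) ‖x-z‖² + ((p-1)/4) ‖y-w‖²`. -/
theorem stmt_10 (p : ℝ) (hp1 : 1 < p) (hp2 : p ≤ 2)
    {M : Type} [MeasurableSpace M] (μ : Measure M)
    (x y z w : Lp ℝ (ENNReal.ofReal p) μ) :
    (1 / 4) * ‖x - z‖ ^ 2 + ((p - 1) / 4) * ‖y - w‖ ^ 2 ≤
      max (max (‖x - y‖ ^ 2) (‖y - z‖ ^ 2)) (max (‖z - w‖ ^ 2) (‖w - x‖ ^ 2)) := by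
  haveI : Fact (1 ≤ ENNReal.ofReal p) :=
    ⟨by rw [ENNReal.one_le_ofReal]; linarith⟩
  have hp0 : (0:ℝ) ≤ p - 1 := by linarith
  have h1 := aux_smooth hp1 hp2 μ (x - y) (y - z)
  have h2 := aux_smooth hp1 hp2 μ (z - w) (w - x)
  rw [sub_add_sub_cancel] at h1
  rw [sub_add_sub_cancel] at h2
  rw [show ‖z - x‖ = ‖x - z‖ from norm_sub_rev z x] at h2
  set g₁ := x - y - (y - z) with hg₁
  set g₂ := z - w - (w - x) with hg₂
  have hdiff : g₁ - g₂ = (2:ℝ) • (w - y) := by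
    rw [two_smul, hg₁, hg₂]
    abel
  have hnd : ‖g₁ - g₂‖ = 2 * ‖y - w‖ := by
    rw [hdiff, norm_smul, norm_sub_rev w y]
    norm_num
  have htri : ‖g₁ - g₂‖ ≤ ‖g₁‖ + ‖g₂‖ := norm_sub_le g₁ g₂
  have hlow : 2 * ‖y - w‖ ^ 2 ≤ ‖g₁‖ ^ 2 + ‖g₂‖ ^ 2 := by
    nlinarith [norm_nonneg g₁, norm_nonneg g₂, norm_nonneg (g₁ - g₂), hnd, htri,
      sq_nonneg (‖g₁‖ - ‖g₂‖), norm_nonneg (y - w)]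
  have hprod := mul_le_mul_of_nonneg_left hlow hp0
  set m := max (max (‖x - y‖ ^ 2) (‖y - z‖ ^ 2)) (max (‖z - w‖ ^ 2) (‖w - x‖ ^ 2)) with hm
  have hb1 : ‖x - y‖ ^ 2 ≤ m := (le_max_left _ _).trans (le_max_left _ _)
  have hb2 : ‖y - z‖ ^ 2 ≤ m := (le_max_right _ _).trans (le_max_left _ _)
  have hb3 : ‖z - w‖ ^ 2 ≤ m := (le_max_left _ _).trans (le_max_right _ _)
  have hb4 : ‖w - x‖ ^ 2 ≤ m := (le_max_right _ _).trans (le_max_right _ _)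
  nlinarith [h1, h2, hprod, hb1, hb2, hb3, hb4]
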